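/- Let H be a nonzero Hermitian matrix with Tr(H) = 0 and whose support is contained in the support of a density matrix ρ. Then there exists ε > 0 such that ρ + εH is positive semidefinite and rank(ρ + εH) < rank(ρ). -/

import Mathlib

open ComplexOrder

namespace RankReduction

open Matrix

variable {d : ℕ}

/-- conjugation of a real diagonal by a matrix -/
noncomputable def conjDiag (V : Matrix (Fin d) (Fin d) ℂ) (f : Fin d → ℝ) :
    Matrix (Fin d) (Fin d) ℂ :=
  V * diagonal (fun i => (f i : ℂ)) * Vᴴ

lemma conjDiag_mul {V : Matrix (Fin d) (Fin d) ℂ} (hV : Vᴴ * V = 1) (f g : Fin d → ℝ) :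
    conjDiag V f * conjDiag V g = conjDiag V (fun i => f i * g i) := by
  unfold conjDiag
  have h1 : diagonal (fun i => (f i : ℂ)) * diagonal (fun i => (g i : ℂ))
      = diagonal (fun i => ((f i * g i : ℝ) : ℂ)) := by
    rw [diagonal_mul_diagonal]
    have : (fun i => (f i : ℂ) * (g i : ℂ)) = fun i => ((f i * g i : ℝ) : ℂ) := by
      funext i; push_cast; ring
    rw [this]
  calc V * diagonal (fun i => (f i : ℂ)) * Vᴴ * (V * diagonal (fun i => (g i : ℂ)) * Vᴴ)
      = V * diagonal (fun i => (f i : ℂ)) * (Vᴴ * V) * diagonal (fun i => (g i : ℂ)) * Vᴴ := by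
        simp only [Matrix.mul_assoc]
    _ = V * (diagonal (fun i => (f i : ℂ)) * diagonal (fun i => (g i : ℂ))) * Vᴴ := by
        rw [hV]; simp only [Matrix.mul_one, Matrix.mul_assoc]
    _ = V * diagonal (fun i => ((f i * g i : ℝ) : ℂ)) * Vᴴ := by rw [h1]

lemma conjDiag_isHermitian (V : Matrix (Fin d) (Fin d) ℂ) (f : Fin d → ℝ) :
    (conjDiag V f).IsHermitian := by
  unfold conjDiag
  rw [IsHermitian, conjTranspose_mul, conjTranspose_mul, conjTranspose_conjTranspose,
    diagonal_conjTranspose]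
  have : star (fun i => (f i : ℂ)) = fun i => (f i : ℂ) := by
    funext i; simp [Complex.conj_ofReal]
  rw [this, Matrix.mul_assoc]

lemma conjDiag_posSemidef {V : Matrix (Fin d) (Fin d) ℂ} (f : Fin d → ℝ)
    (hf : ∀ i, 0 ≤ f i) : (conjDiag V f).PosSemidef := by
  unfold conjDiag
  exact (posSemidef_diagonal_iff.mpr fun i => by
    simpa using Complex.zero_le_real.mpr (hf i)).mul_mul_conjTranspose_same V

lemma conjDiag_one_add_smul {V : Matrix (Fin d) (Fin d) ℂ} (hV' : V * Vᴴ = 1)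
    (ε : ℝ) (f : Fin d → ℝ) :
    conjDiag V (fun i => 1 + ε * f i) = 1 + (ε : ℂ) • conjDiag V f := by
  unfold conjDiag
  have h1 : (diagonal (fun i => ((1 + ε * f i : ℝ) : ℂ)) : Matrix (Fin d) (Fin d) ℂ)
      = 1 + (ε : ℂ) • diagonal (fun i => (f i : ℂ)) := by
    ext i j
    rcases eq_or_ne i j with h | h
    · subst h
      simp only [diagonal_apply_eq, Matrix.add_apply, Matrix.smul_apply, Matrix.one_apply_eq,
        smul_eq_mul]
      push_cast; ring
    · simp [diagonal_apply_ne _ h, Matrix.one_apply_ne h]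
  rw [h1, Matrix.mul_add, Matrix.add_mul, Matrix.mul_one, hV', mul_smul_comm,
    smul_mul_assoc]

lemma eq_zero_of_mulVec (A : Matrix (Fin d) (Fin d) ℂ) (h : ∀ x, A *ᵥ x = 0) : A = 0 := by
  ext i j
  have := congrFun (h (Pi.single j 1)) i
  simpa [mulVec_single] using this

/-- A Hermitian matrix equals the `conjDiag` of its eigenvalues. -/
lemma spectral (A : Matrix (Fin d) (Fin d) ℂ) (hA : A.IsHermitian) :
    A = conjDiag (hA.eigenvectorUnitary : Matrix (Fin d) (Fin d) ℂ) hA.eigenvalues := by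
  exact hA.spectral_theorem.trans rfl

lemma unitary_left (A : Matrix (Fin d) (Fin d) ℂ) (hA : A.IsHermitian) :
    (hA.eigenvectorUnitary : Matrix (Fin d) (Fin d) ℂ)ᴴ * hA.eigenvectorUnitary = 1 := by
  rw [← star_eq_conjTranspose]; exact Unitary.coe_star_mul_self hA.eigenvectorUnitary

lemma unitary_right (A : Matrix (Fin d) (Fin d) ℂ) (hA : A.IsHermitian) :
    (hA.eigenvectorUnitary : Matrix (Fin d) (Fin d) ℂ) *
      (hA.eigenvectorUnitary : Matrix (Fin d) (Fin d) ℂ)ᴴ = 1 := by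
  rw [← star_eq_conjTranspose]; exact Unitary.coe_mul_star_self hA.eigenvectorUnitary

/-- The trace of a Hermitian matrix is the sum of its eigenvalues. -/
lemma sum_eigenvalues (A : Matrix (Fin d) (Fin d) ℂ) (hA : A.IsHermitian) :
    ((∑ i, hA.eigenvalues i : ℝ) : ℂ) = A.trace := by
  conv_rhs => rw [spectral A hA]
  rw [conjDiag, trace_mul_cycle, unitary_left A hA, Matrix.one_mul, trace_diagonal]
  push_cast
  rfl

/-- A nonzero traceless Hermitian matrix has a negative eigenvalue. -/
lemma exists_neg_eigenvalue (A : Matrix (Fin d) (Fin d) ℂ) (hA : A.IsHermitian)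
    (htr : A.trace = 0) (h0 : A ≠ 0) : ∃ j, hA.eigenvalues j < 0 := by
  by_contra h
  push_neg at h
  have hsum : ∑ i, hA.eigenvalues i = 0 := by
    have := sum_eigenvalues A hA
    rw [htr] at this
    exact_mod_cast this
  have hzero : ∀ i ∈ Finset.univ, hA.eigenvalues i = 0 :=
    (Finset.sum_eq_zero_iff_of_nonneg (fun i _ => h i)).mp hsum
  apply h0
  rw [spectral A hA, conjDiag]
  have : (fun i => (hA.eigenvalues i : ℂ)) = fun _ => (0 : ℂ) := by
    funext i; rw [hzero i (Finset.mem_univ i)]; norm_num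
  rw [this]
  simp

end RankReduction

open RankReduction Matrix in
/-- If `H` is a nonzero traceless Hermitian matrix whose support is contained in the
support of a density matrix `ρ` (i.e. `H` kills `ker ρ` and its range lies in the range
of `ρ`), then for some `ε > 0` the matrix `ρ + ε H` is positive semidefinite with
strictly smaller rank than `ρ`. -/
theorem rank_reduction_step (d : ℕ)
    (ρ H : Matrix (Fin d) (Fin d) ℂ)
    (hρ : ρ.PosSemidef) (hρtr : ρ.trace = 1)
    (hH : H.IsHermitian) (hHtr : H.trace = 0) (hH0 : H ≠ 0)
    (hker : LinearMap.ker (Matrix.toLin' ρ) ≤ LinearMap.ker (Matrix.toLin' H))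
    (hrange : LinearMap.range (Matrix.toLin' H) ≤ LinearMap.range (Matrix.toLin' ρ)) :
    ∃ ε : ℝ, 0 < ε ∧ (ρ + (ε : ℂ) • H).PosSemidef ∧
      (ρ + (ε : ℂ) • H).rank < ρ.rank := by
  classical
  rcases Nat.eq_zero_or_pos d with hd | hd
  · exact absurd (by subst hd; ext i j; exact i.elim0) hH0
  have hne : Nonempty (Fin d) := ⟨⟨0, hd⟩⟩
  -- eigendecomposition of ρ
  obtain ⟨V, hVdef⟩ : ∃ V : Matrix (Fin d) (Fin d) ℂ,
      V = (hρ.1.eigenvectorUnitary : Matrix (Fin d) (Fin d) ℂ) := ⟨_, rfl⟩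
  obtain ⟨lam, hlamdef⟩ : ∃ lam : Fin d → ℝ, lam = hρ.1.eigenvalues := ⟨_, rfl⟩
  have hV : Vᴴ * V = 1 := by rw [hVdef]; exact unitary_left ρ hρ.1
  have hV' : V * Vᴴ = 1 := by rw [hVdef]; exact unitary_right ρ hρ.1
  have hlam0 : ∀ i, 0 ≤ lam i := by rw [hlamdef]; exact fun i => hρ.eigenvalues_nonneg i
  have hspec : ρ = conjDiag V lam := by rw [hVdef, hlamdef]; exact spectral ρ hρ.1
  -- square root, pseudo-inverse square root and support projection of ρ
  obtain ⟨r, hrdef⟩ : ∃ r : Fin d → ℝ, r = fun i => Real.sqrt (lam i) := ⟨_, rfl⟩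
  obtain ⟨s, hsdef⟩ : ∃ s : Fin d → ℝ,
      s = fun i => if lam i = 0 then 0 else (Real.sqrt (lam i))⁻¹ := ⟨_, rfl⟩
  obtain ⟨p, hpdef⟩ : ∃ p : Fin d → ℝ, p = fun i => if lam i = 0 then 0 else 1 := ⟨_, rfl⟩
  obtain ⟨R, hRdef⟩ : ∃ R, R = conjDiag V r := ⟨_, rfl⟩
  obtain ⟨S, hSdef⟩ : ∃ S, S = conjDiag V s := ⟨_, rfl⟩
  obtain ⟨P, hPdef⟩ : ∃ P, P = conjDiag V p := ⟨_, rfl⟩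
  have hrs : ∀ i, r i * s i = p i := by
    intro i
    rcases eq_or_ne (lam i) 0 with h | h
    · simp [hrdef, hsdef, hpdef, h]
    · simp only [hrdef, hsdef, hpdef, if_neg h]
      exact mul_inv_cancel₀ (Real.sqrt_ne_zero'.mpr (lt_of_le_of_ne (hlam0 i) (Ne.symm h)))
  have hRS : R * S = P := by
    rw [hRdef, hSdef, hPdef, conjDiag_mul hV]
    exact congrArg (conjDiag V) (funext hrs)
  have hSR : S * R = P := by
    rw [hSdef, hRdef, hPdef, conjDiag_mul hV]
    exact congrArg (conjDiag V) (funext fun i => by rw [mul_comm]; exact hrs i)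
  have hRR : R * R = ρ := by
    rw [hRdef, conjDiag_mul hV, hspec]
    exact congrArg (conjDiag V) (funext fun i => by
      rw [hrdef]; exact Real.mul_self_sqrt (hlam0 i))
  have hρP : ρ * P = ρ := by
    rw [hspec, hPdef, conjDiag_mul hV]
    refine congrArg (conjDiag V) (funext fun i => ?_)
    rcases eq_or_ne (lam i) 0 with h | h <;> simp [hpdef, h]
  have hPS : P * S = S := by
    rw [hSdef, hPdef, conjDiag_mul hV]
    refine congrArg (conjDiag V) (funext fun i => ?_)
    rcases eq_or_ne (lam i) 0 with h | h <;> simp [hsdef, hpdef, h]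
  have hRP : R * P = R := by
    rw [hRdef, hPdef, conjDiag_mul hV]
    refine congrArg (conjDiag V) (funext fun i => ?_)
    rcases eq_or_ne (lam i) 0 with h | h <;> simp [hrdef, hpdef, h]
  have hRherm : Rᴴ = R := by rw [hRdef]; exact conjDiag_isHermitian V r
  have hSherm : Sᴴ = S := by rw [hSdef]; exact conjDiag_isHermitian V s
  have hPherm : Pᴴ = P := by rw [hPdef]; exact conjDiag_isHermitian V p
  -- `H` is supported on the support of `ρ`
  have hHP : H * P = H := by
    have key : H * (1 - P) = 0 := by
      apply eq_zero_of_mulVec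
      intro x
      have hx : ρ *ᵥ ((1 - P) *ᵥ x) = 0 := by
        rw [mulVec_mulVec, Matrix.mul_sub, Matrix.mul_one, hρP, sub_self, zero_mulVec]
      have hmem : (1 - P) *ᵥ x ∈ LinearMap.ker (Matrix.toLin' ρ) := by
        rw [LinearMap.mem_ker, Matrix.toLin'_apply]; exact hx
      have := hker hmem
      rwa [LinearMap.mem_ker, Matrix.toLin'_apply, mulVec_mulVec] at this
    calc H * P = H * P + H * (1 - P) := by rw [key, add_zero]
      _ = H * (P + (1 - P)) := by rw [Matrix.mul_add]
      _ = H := by rw [add_sub_cancel]; exact Matrix.mul_one H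
  have hPH : P * H = H := by
    calc P * H = Pᴴ * Hᴴ := by rw [hPherm, hH.eq]
      _ = (H * P)ᴴ := by rw [conjTranspose_mul]
      _ = H := by rw [hHP, hH.eq]
  -- the compressed matrix M = S H S
  obtain ⟨M, hMdef⟩ : ∃ M, M = S * H * S := ⟨_, rfl⟩
  have hMherm : M.IsHermitian := by
    rw [hMdef, IsHermitian, conjTranspose_mul, conjTranspose_mul, hSherm, hH.eq,
      Matrix.mul_assoc]
  have hPM : P * M = M := by
    rw [hMdef, ← Matrix.mul_assoc, ← Matrix.mul_assoc, hPS]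
  have hRMR : R * M * R = H := by
    rw [hMdef]
    calc R * (S * H * S) * R = R * S * H * (S * R) := by simp only [Matrix.mul_assoc]
      _ = P * H * P := by rw [hRS, hSR]
      _ = H := by rw [hPH, hHP]
  -- minimal eigenvalue of M
  obtain ⟨i0, -, hi0⟩ := Finset.exists_min_image (Finset.univ : Finset (Fin d))
    hMherm.eigenvalues Finset.univ_nonempty
  obtain ⟨μ, hμdef⟩ : ∃ μ : ℝ, μ = hMherm.eigenvalues i0 := ⟨_, rfl⟩
  have hμmin : ∀ j, μ ≤ hMherm.eigenvalues j := fun j => by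
    rw [hμdef]; exact hi0 j (Finset.mem_univ j)
  -- μ is negative
  obtain ⟨j, hj⟩ := exists_neg_eigenvalue H hH hHtr hH0
  obtain ⟨v, hvdef⟩ : ∃ v : Fin d → ℂ, v = ⇑(hH.eigenvectorBasis j) := ⟨_, rfl⟩
  have hHv : H *ᵥ v = hH.eigenvalues j • v := by rw [hvdef]; exact hH.mulVec_eigenvectorBasis j
  have hv0 : v ≠ 0 := by
    rw [hvdef]
    intro h
    exact hH.eigenvectorBasis.orthonormal.ne_zero j (by ext i; exact congrFun h i)
  have hμneg : μ < 0 := by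
    by_contra hcon
    push_neg at hcon
    have hMpsd : M.PosSemidef := by
      rw [spectral M hMherm]
      exact conjDiag_posSemidef _ fun i => le_trans hcon (hμmin i)
    have h1 := hMpsd.dotProduct_mulVec_nonneg (R *ᵥ v)
    have h2 : star (R *ᵥ v) ⬝ᵥ (M *ᵥ (R *ᵥ v)) = (hH.eigenvalues j : ℂ) * (star v ⬝ᵥ v) := by
      calc star (R *ᵥ v) ⬝ᵥ (M *ᵥ (R *ᵥ v))
          = (star v ᵥ* Rᴴ) ⬝ᵥ ((M * R) *ᵥ v) := by rw [star_mulVec, mulVec_mulVec]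
        _ = star v ⬝ᵥ (Rᴴ *ᵥ ((M * R) *ᵥ v)) := (dotProduct_mulVec _ _ _).symm
        _ = star v ⬝ᵥ ((Rᴴ * (M * R)) *ᵥ v) := by rw [mulVec_mulVec]
        _ = star v ⬝ᵥ (H *ᵥ v) := by rw [hRherm, ← Matrix.mul_assoc, hRMR]
        _ = (hH.eigenvalues j : ℂ) * (star v ⬝ᵥ v) := by
            rw [hHv, dotProduct_smul]
            simp [Complex.real_smul]
    rw [h2] at h1
    have hq : 0 < star v ⬝ᵥ v := by
      rcases (dotProduct_star_self_nonneg v).lt_or_eq with h | h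
      · exact h
      · exact absurd (dotProduct_star_self_eq_zero.mp h.symm) hv0
    have : (hH.eigenvalues j : ℂ) * (star v ⬝ᵥ v) < 0 :=
      mul_neg_of_neg_of_pos (by exact_mod_cast hj) hq
    exact absurd (lt_of_le_of_lt h1 this) (lt_irrefl 0)
  -- the perturbation size ε = -μ⁻¹
  have hε : (0:ℝ) < -μ⁻¹ := by
    have : μ⁻¹ < 0 := inv_lt_zero.mpr hμneg
    linarith
  have hεμ : -μ⁻¹ * μ = -1 := by
    rw [neg_mul, inv_mul_cancel₀ hμneg.ne]
  have hεμc : (1:ℂ) + ((-μ⁻¹ : ℝ) : ℂ) * (μ : ℂ) = 0 := by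
    have hμc : (μ : ℂ) ≠ 0 := by exact_mod_cast hμneg.ne
    push_cast
    rw [neg_mul, inv_mul_cancel₀ hμc]
    norm_num
  -- 1 + ε M is positive semidefinite
  obtain ⟨W, hWdef⟩ : ∃ W : Matrix (Fin d) (Fin d) ℂ,
      W = (hMherm.eigenvectorUnitary : Matrix (Fin d) (Fin d) ℂ) := ⟨_, rfl⟩
  have hW' : W * Wᴴ = 1 := by rw [hWdef]; exact unitary_right M hMherm
  have hMspec : M = conjDiag W hMherm.eigenvalues := by rw [hWdef]; exact spectral M hMherm
  have hK : conjDiag W (fun i => 1 + (-μ⁻¹) * hMherm.eigenvalues i)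
      = 1 + ((-μ⁻¹ : ℝ) : ℂ) • M := by
    rw [conjDiag_one_add_smul hW', ← hMspec]
  have hKpsd : ((1 : Matrix (Fin d) (Fin d) ℂ) + ((-μ⁻¹ : ℝ) : ℂ) • M).PosSemidef := by
    rw [← hK]
    refine conjDiag_posSemidef _ fun i => ?_
    have h1 : -μ⁻¹ * μ ≤ -μ⁻¹ * hMherm.eigenvalues i :=
      mul_le_mul_of_nonneg_left (hμmin i) hε.le
    linarith [hεμ]
  have hmain : ρ + ((-μ⁻¹ : ℝ) : ℂ) • H
      = R * ((1 : Matrix (Fin d) (Fin d) ℂ) + ((-μ⁻¹ : ℝ) : ℂ) • M) * R := by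
    rw [Matrix.mul_add, Matrix.add_mul, Matrix.mul_one, hRR, mul_smul_comm, smul_mul_assoc,
      hRMR]
  -- the kernel vector
  obtain ⟨w, hwdef⟩ : ∃ w : Fin d → ℂ, w = ⇑(hMherm.eigenvectorBasis i0) := ⟨_, rfl⟩
  have hMw : M *ᵥ w = μ • w := by
    rw [hwdef, hμdef]; exact hMherm.mulVec_eigenvectorBasis i0
  have hw0 : w ≠ 0 := by
    rw [hwdef]
    intro h
    exact hMherm.eigenvectorBasis.orthonormal.ne_zero i0 (by ext i; exact congrFun h i)
  have hPw : P *ᵥ w = w := by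
    have h1 : P *ᵥ (M *ᵥ w) = M *ᵥ w := by rw [mulVec_mulVec, hPM]
    rw [hMw, mulVec_smul] at h1
    exact smul_right_injective (Fin d → ℂ) hμneg.ne h1
  have hRSw : R *ᵥ (S *ᵥ w) = w := by rw [mulVec_mulVec, hRS, hPw]
  have hsmulw : μ • w = (μ : ℂ) • w := by
    funext i; simp [Pi.smul_apply, Complex.real_smul]
  have hAu : (ρ + ((-μ⁻¹ : ℝ) : ℂ) • H) *ᵥ (S *ᵥ w) = 0 := by
    rw [hmain, ← mulVec_mulVec, ← mulVec_mulVec, hRSw, add_mulVec, one_mulVec,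
      smul_mulVec, hMw, hsmulw, smul_smul]
    have h2 : w + (((-μ⁻¹ : ℝ) : ℂ) * (μ : ℂ)) • w
        = ((1:ℂ) + ((-μ⁻¹ : ℝ) : ℂ) * (μ : ℂ)) • w := by
      rw [add_smul, one_smul]
    rw [h2, hεμc, zero_smul, mulVec_zero]
  have hρu : ρ *ᵥ (S *ᵥ w) ≠ 0 := by
    have hval : ρ *ᵥ (S *ᵥ w) = R *ᵥ w := by
      rw [mulVec_mulVec, ← hRR, Matrix.mul_assoc, hRS, hRP]
    rw [hval]
    intro h
    have h2 : S *ᵥ (R *ᵥ w) = 0 := by rw [h, mulVec_zero]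
    rw [mulVec_mulVec, hSR, hPw] at h2
    exact hw0 h2
  -- rank comparison
  have hkerlt : LinearMap.ker ρ.mulVecLin
      < LinearMap.ker (ρ + ((-μ⁻¹ : ℝ) : ℂ) • H).mulVecLin := by
    rw [SetLike.lt_iff_le_and_exists]
    constructor
    · intro x hx
      rw [LinearMap.mem_ker, mulVecLin_apply] at hx
      have hHx : H *ᵥ x = 0 := by
        have hmem : x ∈ LinearMap.ker (Matrix.toLin' ρ) := by
          rw [LinearMap.mem_ker, Matrix.toLin'_apply]; exact hx
        have := hker hmem
        rwa [LinearMap.mem_ker, Matrix.toLin'_apply] at this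
      rw [LinearMap.mem_ker, mulVecLin_apply, add_mulVec, hx, smul_mulVec, hHx,
        smul_zero, add_zero]
    · exact ⟨S *ᵥ w, by rw [LinearMap.mem_ker, mulVecLin_apply]; exact hAu,
        by rw [LinearMap.mem_ker, mulVecLin_apply]; exact hρu⟩
  have hfin : Module.finrank ℂ (LinearMap.ker ρ.mulVecLin)
      < Module.finrank ℂ (LinearMap.ker (ρ + ((-μ⁻¹ : ℝ) : ℂ) • H).mulVecLin) :=
    Submodule.finrank_lt_finrank_of_lt hkerlt
  have e1 := LinearMap.finrank_range_add_finrank_ker ρ.mulVecLin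
  have e2 := LinearMap.finrank_range_add_finrank_ker (ρ + ((-μ⁻¹ : ℝ) : ℂ) • H).mulVecLin
  have hr1 : (ρ + ((-μ⁻¹ : ℝ) : ℂ) • H).rank
      = Module.finrank ℂ (LinearMap.range (ρ + ((-μ⁻¹ : ℝ) : ℂ) • H).mulVecLin) := rfl
  have hr2 : ρ.rank = Module.finrank ℂ (LinearMap.range ρ.mulVecLin) := rfl
  refine ⟨-μ⁻¹, hε, ?_, ?_⟩
  · have h := hKpsd.conjTranspose_mul_mul_same R
    rw [hRherm] at h
    rw [hmain]
    exact h
  · rw [hr1, hr2]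
    omega
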